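/- Let α be a nonnegative random variable representable as α = ∑_{j=0}^{2N}(T_{j+1} − T_j) where N is a nonnegative integer random variable with P(N > n) ≤ e^{−Cn}, and each increment satisfies P(T_{j+1} − T_j > t) ≤ C₁·exp(−C₂·t^{1/5}) for t ≥ t*. Then there exist constants C', C'' > 0 and t₁ > 0 such that for all t ≥ t₁, P(α > t) ≤ C'·exp(−C''·t^{1/6}). -/

import Mathlib

open MeasureTheory

/-- If α = ∑_{j=0}^{2N} (T_{j+1} − T_j) where P(N > n) ≤ e^{−Cn} and each increment has
stretched-exponential tail with exponent 1/5, then α has a stretched-exponential tail with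
exponent 1/6. -/
theorem stmt15 {Ω : Type*} [MeasurableSpace Ω] (μ : Measure Ω) [IsProbabilityMeasure μ]
    (T : ℕ → Ω → ℝ) (N : Ω → ℕ)
    (hmono : ∀ j ω, T j ω ≤ T (j + 1) ω)
    (C C₁ C₂ tstar : ℝ) (hC : 0 < C) (hC₁ : 0 < C₁) (hC₂ : 0 < C₂) (htstar : 0 < tstar)
    (hN : ∀ n : ℕ, μ {ω | n < N ω} ≤ ENNReal.ofReal (Real.exp (-(C * n))))
    (hT : ∀ j : ℕ, ∀ t : ℝ, tstar ≤ t →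
      μ {ω | t < T (j + 1) ω - T j ω} ≤
        ENNReal.ofReal (C₁ * Real.exp (-(C₂ * t ^ ((1:ℝ)/5))))) :
    ∃ C' C'' t₁ : ℝ, 0 < C' ∧ 0 < C'' ∧ 0 < t₁ ∧ ∀ t : ℝ, t₁ ≤ t →
      μ {ω | t < ∑ j ∈ Finset.range (2 * N ω + 1), (T (j + 1) ω - T j ω)} ≤
        ENNReal.ofReal (C' * Real.exp (-(C'' * t ^ ((1:ℝ)/6)))) := by
  refine ⟨Real.exp C + 18 * C₁ / C₂, min C (C₂ / 6),
    max 1 ((3 * tstar) ^ ((6:ℝ)/5)), by positivity, lt_min hC (by positivity),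
    lt_of_lt_of_le one_pos (le_max_left _ _), ?_⟩
  intro t ht
  have ht1 : (1:ℝ) ≤ t := le_trans (le_max_left _ _) ht
  have ht0 : (0:ℝ) < t := lt_of_lt_of_le one_pos ht1
  set x := t ^ ((1:ℝ)/6) with hxdef
  have hx1 : (1:ℝ) ≤ x := by
    calc (1:ℝ) = 1 ^ ((1:ℝ)/6) := (Real.one_rpow _).symm
    _ ≤ x := Real.rpow_le_rpow zero_le_one ht1 (by norm_num)
  have hx0 : (0:ℝ) < x := lt_of_lt_of_le one_pos hx1
  set n := ⌊x⌋₊ with hndef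
  have hnx : (n:ℝ) ≤ x := Nat.floor_le hx0.le
  have hxn : x < (n:ℝ) + 1 := Nat.lt_floor_add_one x
  have hm3x : (2*(n:ℝ)+1) ≤ 3 * x := by nlinarith
  have hmpos : (0:ℝ) < 2*(n:ℝ)+1 := by positivity
  set s := t / (2*(n:ℝ)+1) with hsdef
  -- t^{5/6} * x = t
  have ht56 : t ^ ((5:ℝ)/6) * x = t := by
    rw [hxdef, ← Real.rpow_add ht0]; norm_num
  have hs : t ^ ((5:ℝ)/6) / 3 ≤ s := by
    rw [hsdef, div_le_div_iff₀ (by norm_num) hmpos]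
    calc t ^ ((5:ℝ)/6) * (2*(n:ℝ)+1) ≤ t ^ ((5:ℝ)/6) * (3*x) :=
          mul_le_mul_of_nonneg_left hm3x (Real.rpow_nonneg ht0.le _)
      _ = t * 3 := by rw [mul_comm (3:ℝ) x, ← mul_assoc, ht56]
  have hts : tstar ≤ s := by
    refine le_trans ?_ hs
    have h36 : (3*tstar) ^ ((6:ℝ)/5) ≤ t := le_trans (le_max_right _ _) ht
    have h3t : 3 * tstar ≤ t ^ ((5:ℝ)/6) := by
      calc 3 * tstar = ((3*tstar) ^ ((6:ℝ)/5)) ^ ((5:ℝ)/6) := by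
            rw [← Real.rpow_mul (by positivity)]; norm_num
        _ ≤ t ^ ((5:ℝ)/6) := Real.rpow_le_rpow (by positivity) h36 (by norm_num)
    linarith
  have hspos : (0:ℝ) < s := lt_of_lt_of_le htstar hts
  -- s^{1/5} ≥ x/3
  have hs15 : x / 3 ≤ s ^ ((1:ℝ)/5) := by
    have h1 : (t ^ ((5:ℝ)/6) / 3) ^ ((1:ℝ)/5) ≤ s ^ ((1:ℝ)/5) :=
      Real.rpow_le_rpow (by positivity) hs (by norm_num)
    have h2 : (t ^ ((5:ℝ)/6) / 3) ^ ((1:ℝ)/5) = x / 3 ^ ((1:ℝ)/5) := by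
      rw [Real.div_rpow (by positivity) (by norm_num), ← Real.rpow_mul ht0.le]
      norm_num [hxdef]
    have h3 : (3:ℝ) ^ ((1:ℝ)/5) ≤ 3 := by
      calc (3:ℝ) ^ ((1:ℝ)/5) ≤ 3 ^ (1:ℝ) :=
            Real.rpow_le_rpow_of_exponent_le (by norm_num) (by norm_num)
        _ = 3 := Real.rpow_one 3
    have h4 : x / 3 ≤ x / 3 ^ ((1:ℝ)/5) := by gcongr
    linarith [h2 ▸ h1]
  -- set inclusion
  have hsub : {ω | t < ∑ j ∈ Finset.range (2 * N ω + 1), (T (j + 1) ω - T j ω)} ⊆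
      {ω | n < N ω} ∪ ⋃ j ∈ Finset.range (2*n+1), {ω | s < T (j + 1) ω - T j ω} := by
    intro ω hω
    by_contra hcon
    rw [Set.mem_union] at hcon
    push_neg at hcon
    obtain ⟨hA, hB⟩ := hcon
    simp only [Set.mem_setOf_eq, not_lt] at hA
    simp only [Set.mem_iUnion, Set.mem_setOf_eq, not_exists, not_lt] at hB
    have hle : ∑ j ∈ Finset.range (2 * N ω + 1), (T (j + 1) ω - T j ω)
        ≤ ∑ j ∈ Finset.range (2*n+1), (T (j + 1) ω - T j ω) :=
      Finset.sum_le_sum_of_subset_of_nonneg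
        (Finset.range_subset_range.mpr (by omega))
        (fun j _ _ => sub_nonneg.mpr (hmono j ω))
    have hle2 : ∑ j ∈ Finset.range (2*n+1), (T (j + 1) ω - T j ω) ≤ t := by
      calc ∑ j ∈ Finset.range (2*n+1), (T (j + 1) ω - T j ω)
          ≤ ∑ _j ∈ Finset.range (2*n+1), s := Finset.sum_le_sum (fun j hj => hB j hj)
        _ = (2*(n:ℝ)+1) * s := by
            rw [Finset.sum_const, Finset.card_range, nsmul_eq_mul]; push_cast; ring
        _ = t := by rw [hsdef, mul_div_cancel₀ _ hmpos.ne']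
    exact absurd hω (not_lt.mpr (hle.trans hle2))
  -- measure bound
  have key : μ {ω | t < ∑ j ∈ Finset.range (2 * N ω + 1), (T (j + 1) ω - T j ω)}
      ≤ μ {ω | n < N ω} + ∑ j ∈ Finset.range (2*n+1), μ {ω | s < T (j + 1) ω - T j ω} :=
    (measure_mono hsub).trans ((measure_union_le _ _).trans
      (add_le_add_right (measure_biUnion_finset_le _ _) _))
  have hhead : μ {ω | n < N ω} ≤ ENNReal.ofReal (Real.exp C * Real.exp (-(C * x))) := by
    refine (hN n).trans (ENNReal.ofReal_le_ofReal ?_)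
    rw [← Real.exp_add]
    apply Real.exp_le_exp.mpr
    nlinarith
  have htail : ∑ j ∈ Finset.range (2*n+1), μ {ω | s < T (j + 1) ω - T j ω}
      ≤ ENNReal.ofReal (18 * C₁ / C₂ * Real.exp (-(C₂/6 * x))) := by
    calc ∑ j ∈ Finset.range (2*n+1), μ {ω | s < T (j + 1) ω - T j ω}
        ≤ ∑ _j ∈ Finset.range (2*n+1),
            ENNReal.ofReal (C₁ * Real.exp (-(C₂ * s ^ ((1:ℝ)/5)))) :=
          Finset.sum_le_sum (fun j _ => hT j s hts)
      _ = ENNReal.ofReal ((2*(n:ℝ)+1) * (C₁ * Real.exp (-(C₂ * s ^ ((1:ℝ)/5))))) := by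
          rw [Finset.sum_const, Finset.card_range, nsmul_eq_mul,
            ← ENNReal.ofReal_natCast (2*n+1), ← ENNReal.ofReal_mul (by positivity)]
          congr 1
          push_cast; ring
      _ ≤ ENNReal.ofReal (18 * C₁ / C₂ * Real.exp (-(C₂/6 * x))) := by
          apply ENNReal.ofReal_le_ofReal
          have hexp1 : Real.exp (-(C₂ * s ^ ((1:ℝ)/5))) ≤ Real.exp (-(C₂/3 * x)) := by
            apply Real.exp_le_exp.mpr
            have : C₂/3 * x ≤ C₂ * s ^ ((1:ℝ)/5) := by nlinarith
            linarith
          have hxb : x ≤ 6 / C₂ * Real.exp (C₂/6 * x) := by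
            have h2 : C₂/6 * x ≤ Real.exp (C₂/6 * x) := by
              linarith [Real.add_one_le_exp (C₂/6 * x)]
            rw [div_mul_eq_mul_div, le_div_iff₀ hC₂]
            linarith
          have hee : Real.exp (C₂/6 * x) * Real.exp (-(C₂/3 * x)) =
              Real.exp (-(C₂/6 * x)) := by
            rw [← Real.exp_add]; congr 1; ring
          calc (2*(n:ℝ)+1) * (C₁ * Real.exp (-(C₂ * s ^ ((1:ℝ)/5))))
              ≤ (3*x) * (C₁ * Real.exp (-(C₂/3 * x))) := by
                apply mul_le_mul hm3x (mul_le_mul_of_nonneg_left hexp1 hC₁.le)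
                  (by positivity) (by positivity)
            _ = 3 * C₁ * (x * Real.exp (-(C₂/3 * x))) := by ring
            _ ≤ 3 * C₁ * ((6 / C₂ * Real.exp (C₂/6 * x)) * Real.exp (-(C₂/3 * x))) := by
                apply mul_le_mul_of_nonneg_left _ (by positivity)
                exact mul_le_mul_of_nonneg_right hxb (Real.exp_pos _).le
            _ = 18 * C₁ / C₂ * (Real.exp (C₂/6 * x) * Real.exp (-(C₂/3 * x))) := by
                field_simp; ring
            _ = 18 * C₁ / C₂ * Real.exp (-(C₂/6 * x)) := by rw [hee]
  calc μ {ω | t < ∑ j ∈ Finset.range (2 * N ω + 1), (T (j + 1) ω - T j ω)}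
      ≤ ENNReal.ofReal (Real.exp C * Real.exp (-(C * x)))
        + ENNReal.ofReal (18 * C₁ / C₂ * Real.exp (-(C₂/6 * x))) :=
        key.trans (add_le_add hhead htail)
    _ = ENNReal.ofReal (Real.exp C * Real.exp (-(C * x))
        + 18 * C₁ / C₂ * Real.exp (-(C₂/6 * x))) :=
        (ENNReal.ofReal_add (by positivity) (by positivity)).symm
    _ ≤ ENNReal.ofReal ((Real.exp C + 18 * C₁ / C₂) * Real.exp (-(min C (C₂/6) * x))) := by
        apply ENNReal.ofReal_le_ofReal
        have h1 : Real.exp (-(C * x)) ≤ Real.exp (-(min C (C₂/6) * x)) :=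
          Real.exp_le_exp.mpr (neg_le_neg (mul_le_mul_of_nonneg_right (min_le_left _ _) hx0.le))
        have h2 : Real.exp (-(C₂/6 * x)) ≤ Real.exp (-(min C (C₂/6) * x)) :=
          Real.exp_le_exp.mpr (neg_le_neg (mul_le_mul_of_nonneg_right (min_le_right _ _) hx0.le))
        have e1 : Real.exp C * Real.exp (-(C * x)) ≤ Real.exp C * Real.exp (-(min C (C₂/6) * x)) :=
          mul_le_mul_of_nonneg_left h1 (Real.exp_pos C).le
        have e2 : 18 * C₁ / C₂ * Real.exp (-(C₂/6 * x)) ≤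
            18 * C₁ / C₂ * Real.exp (-(min C (C₂/6) * x)) :=
          mul_le_mul_of_nonneg_left h2 (by positivity)
        linarith
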